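/- For all τ with 0 < τ ≤ (4π)^{-4}: (Σ_{0≠k∈ℤ²} (1 + τ(2π|k|)⁴)^{-2} (2π|k|)^{-2})^{1/2} ≤ (-(1/(8π)) ln τ + 0.52)^{1/2}, and for all τ > (4π)^{-4} the same sum is at most 0.8803. -/

import Mathlib

open Real

/-- Euclidean norm of a lattice frequency `k ∈ ℤ²`. -/
noncomputable def kn2 (k : ℤ × ℤ) : ℝ :=
  Real.sqrt ((k.1 : ℝ) ^ 2 + (k.2 : ℝ) ^ 2)

namespace Stmt19Aux

open MeasureTheory Set

noncomputable def g (c m : ℝ) : ℝ := ((1 + c * m ^ 2)⁻¹) ^ 2 * (4 * π ^ 2 * m)⁻¹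

noncomputable def F (c : ℝ) (x : ℝ × ℝ) : ℝ := g c (x.1 ^ 2 + x.2 ^ 2)

/-- The unit square attached to the lattice point `p`, on the near side to the origin. -/
def Q (p : ℕ × ℕ) : Set (ℝ × ℝ) :=
  Ioc ((p.1 : ℝ) - 1) (p.1 : ℝ) ×ˢ Ioc ((p.2 : ℝ) - 1) (p.2 : ℝ)

def cond (p : ℕ × ℕ) : Prop := 1 ≤ p.1 ∧ 1 ≤ p.2 ∧ ¬(p.1 = 1 ∧ p.2 = 1)

/-- The region capturing all the squares. -/
def W : Set (ℝ × ℝ) := {x | 0 ≤ x.1 ∧ 0 ≤ x.2 ∧ 1 ≤ x.1 ^ 2 + x.2 ^ 2}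

noncomputable def aterm (τ : ℝ) (k : ℤ × ℤ) : ℝ :=
  if k ≠ 0 then ((1 + τ * (2 * π * kn2 k) ^ 4)⁻¹) ^ 2 * ((2 * π * kn2 k) ^ 2)⁻¹ else 0

lemma g_nonneg {c m : ℝ} (hm : 0 ≤ m) : 0 ≤ g c m := by
  have h1 : (0:ℝ) ≤ 4 * π ^ 2 * m := by positivity
  exact mul_nonneg (sq_nonneg _) (inv_nonneg.2 h1)

lemma F_nonneg (c : ℝ) (x : ℝ × ℝ) : 0 ≤ F c x := g_nonneg (by positivity)

lemma g_anti {c m m' : ℝ} (hc : 0 ≤ c) (hm : 0 < m) (h : m ≤ m') : g c m' ≤ g c m := by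
  have hm' : 0 < m' := lt_of_lt_of_le hm h
  have h1 : (1 + c * m' ^ 2)⁻¹ ≤ (1 + c * m ^ 2)⁻¹ := by
    apply inv_anti₀ (by positivity)
    have : m ^ 2 ≤ m' ^ 2 := by nlinarith
    nlinarith [mul_le_mul_of_nonneg_left this hc]
  have h2 : (4 * π ^ 2 * m')⁻¹ ≤ (4 * π ^ 2 * m)⁻¹ := by
    apply inv_anti₀ (by positivity)
    nlinarith [sq_nonneg π, pi_pos]
  have h3 : (0:ℝ) ≤ (1 + c * m ^ 2)⁻¹ := by positivity
  have h4 : (0:ℝ) ≤ (1 + c * m' ^ 2)⁻¹ := by positivity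
  have h5 : ((1 + c * m' ^ 2)⁻¹) ^ 2 ≤ ((1 + c * m ^ 2)⁻¹) ^ 2 := by nlinarith
  apply mul_le_mul h5 h2 (by positivity) (by positivity)

lemma g_le_inv {c m : ℝ} (hc : 0 ≤ c) (hm : 0 ≤ m) : g c m ≤ (4 * π ^ 2 * m)⁻¹ := by
  rw [g]
  have h1 : (1 + c * m ^ 2)⁻¹ ≤ 1 := by
    apply inv_le_one_of_one_le₀
    nlinarith [sq_nonneg m]
  have h0 : (0:ℝ) ≤ (1 + c * m ^ 2)⁻¹ := by positivity
  have h2 : ((1 + c * m ^ 2)⁻¹) ^ 2 ≤ 1 := by nlinarith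
  have h3 : (0:ℝ) ≤ (4 * π ^ 2 * m)⁻¹ := by positivity
  nlinarith

lemma kn2_sq (k : ℤ × ℤ) : kn2 k ^ 2 = (k.1 : ℝ) ^ 2 + (k.2 : ℝ) ^ 2 :=
  Real.sq_sqrt (by positivity)

/-- the basic rewriting of a term. -/
lemma aterm_eq (τ : ℝ) {k : ℤ × ℤ} (hk : k ≠ 0) :
    aterm τ k = ((1 + 16 * π ^ 4 * τ * ((k.1 : ℝ) ^ 2 + (k.2 : ℝ) ^ 2) ^ 2)⁻¹) ^ 2 *
      (4 * π ^ 2 * ((k.1 : ℝ) ^ 2 + (k.2 : ℝ) ^ 2))⁻¹ := by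
  rw [aterm, if_pos hk]
  have h2 : (2 * π * kn2 k) ^ 2 = 4 * π ^ 2 * ((k.1 : ℝ) ^ 2 + (k.2 : ℝ) ^ 2) := by
    have := kn2_sq k; nlinarith [this]
  have h4 : (2 * π * kn2 k) ^ 4 = 16 * π ^ 4 * ((k.1 : ℝ) ^ 2 + (k.2 : ℝ) ^ 2) ^ 2 := by
    have h := kn2_sq k
    have : (2 * π * kn2 k) ^ 4 = ((2 * π * kn2 k) ^ 2) ^ 2 := by ring
    rw [this, h2]; ring
  rw [h2, h4]
  ring_nf

lemma aterm_le_g {τ σ : ℝ} (hσ : 0 ≤ σ) (hστ : σ ≤ τ) (k : ℤ × ℤ) :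
    aterm τ k ≤ g (16 * π ^ 4 * σ) ((k.1 : ℝ) ^ 2 + (k.2 : ℝ) ^ 2) := by
  by_cases hk : k = 0
  · subst hk
    simp [aterm, g]
  · rw [aterm_eq τ hk, g]
    set m : ℝ := (k.1 : ℝ) ^ 2 + (k.2 : ℝ) ^ 2 with hm
    have hm0 : 0 ≤ m := by positivity
    have hmono : 16 * π ^ 4 * σ * m ^ 2 ≤ 16 * π ^ 4 * τ * m ^ 2 := by
      apply mul_le_mul_of_nonneg_right _ (sq_nonneg m)
      have h16 : (0:ℝ) ≤ 16 * π ^ 4 := by positivity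
      nlinarith
    have hpσ : (0:ℝ) < 1 + 16 * π ^ 4 * σ * m ^ 2 := by positivity
    have hpτ : (0:ℝ) < 1 + 16 * π ^ 4 * τ * m ^ 2 := by linarith
    have h1 : (1 + 16 * π ^ 4 * τ * m ^ 2)⁻¹ ≤ (1 + 16 * π ^ 4 * σ * m ^ 2)⁻¹ := by
      apply inv_anti₀ hpσ (by linarith)
    have h0 : (0:ℝ) ≤ (1 + 16 * π ^ 4 * τ * m ^ 2)⁻¹ := (inv_nonneg).2 hpτ.le
    have hsq : ((1 + 16 * π ^ 4 * τ * m ^ 2)⁻¹) ^ 2 ≤ ((1 + 16 * π ^ 4 * σ * m ^ 2)⁻¹) ^ 2 := by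
      nlinarith
    have h3 : (0:ℝ) ≤ (4 * π ^ 2 * m)⁻¹ := by positivity
    exact mul_le_mul_of_nonneg_right hsq h3

lemma aterm_le_basic {τ : ℝ} (hτ : 0 ≤ τ) (k : ℤ × ℤ) :
    aterm τ k ≤ (4 * π ^ 2 * ((k.1 : ℝ) ^ 2 + (k.2 : ℝ) ^ 2))⁻¹ := by
  have h := aterm_le_g (le_refl (0:ℝ)) hτ k
  refine h.trans ?_
  have h2 := g_le_inv (c := 16 * π ^ 4 * 0) (m := (k.1 : ℝ) ^ 2 + (k.2 : ℝ) ^ 2)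
    (by norm_num) (by positivity)
  exact h2

def R (p : ℕ × ℕ) : Set (ℝ × ℝ) :=
  Icc ((p.1 : ℝ) - 1) (p.1 : ℝ) ×ˢ Icc ((p.2 : ℝ) - 1) (p.2 : ℝ)

lemma Q_subset_R (p : ℕ × ℕ) : Q p ⊆ R p :=
  Set.prod_mono Set.Ioc_subset_Icc_self Set.Ioc_subset_Icc_self

lemma cond_two {p : ℕ × ℕ} (hp : cond p) : 2 ≤ p.1 ∨ 2 ≤ p.2 := by
  rcases hp with ⟨h1, h2, h3⟩; omega

lemma R_one_le {p : ℕ × ℕ} (hp : cond p) {x : ℝ × ℝ} (hx : x ∈ R p) :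
    1 ≤ x.1 ^ 2 + x.2 ^ 2 := by
  obtain ⟨hx1, hx2⟩ := hx
  simp only [mem_Icc] at hx1 hx2
  rcases cond_two hp with h | h
  · have h2 : (2:ℝ) ≤ (p.1 : ℝ) := by exact_mod_cast h
    have hx1' : 1 ≤ x.1 := by linarith [hx1.1]
    nlinarith [sq_nonneg x.2]
  · have h2 : (2:ℝ) ≤ (p.2 : ℝ) := by exact_mod_cast h
    have hx2' : 1 ≤ x.2 := by linarith [hx2.1]
    nlinarith [sq_nonneg x.1]

lemma Q_mem {p : ℕ × ℕ} (hp1 : 1 ≤ p.1) (hp2 : 1 ≤ p.2) {x : ℝ × ℝ} (hx : x ∈ Q p) :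
    0 < x.1 ∧ x.1 ≤ (p.1 : ℝ) ∧ 0 < x.2 ∧ x.2 ≤ (p.2 : ℝ) := by
  obtain ⟨hx1, hx2⟩ := hx
  simp only [mem_Ioc] at hx1 hx2
  have h1 : (1:ℝ) ≤ (p.1 : ℝ) := by exact_mod_cast hp1
  have h2 : (1:ℝ) ≤ (p.2 : ℝ) := by exact_mod_cast hp2
  exact ⟨by linarith [hx1.1], hx1.2, by linarith [hx2.1], hx2.2⟩

lemma continuousOn_F {c : ℝ} (hc : 0 ≤ c) {p : ℕ × ℕ} (hp : cond p) :
    ContinuousOn (F c) (R p) := by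
  have hq : Continuous fun x : ℝ × ℝ => x.1 ^ 2 + x.2 ^ 2 := by continuity
  unfold F g
  apply ContinuousOn.mul
  · apply ContinuousOn.pow
    apply ContinuousOn.inv₀
    · exact (continuous_const.add (continuous_const.mul (hq.pow 2))).continuousOn
    · intro x _
      have h1 : 0 ≤ c * (x.1 ^ 2 + x.2 ^ 2) ^ 2 := mul_nonneg hc (sq_nonneg _)
      exact ne_of_gt (by linarith)
  · apply ContinuousOn.inv₀
    · exact (continuous_const.mul hq).continuousOn
    · intro x hx
      have h1 := R_one_le hp hx
      have hππ : (0:ℝ) < π ^ 2 := by positivity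
      exact ne_of_gt (by nlinarith)

lemma measurableSet_Q (p : ℕ × ℕ) : MeasurableSet (Q p) :=
  measurableSet_Ioc.prod measurableSet_Ioc

lemma integrableOn_F_Q {c : ℝ} (hc : 0 ≤ c) {p : ℕ × ℕ} (hp : cond p) :
    IntegrableOn (F c) (Q p) := by
  have hcomp : IsCompact (R p) := isCompact_Icc.prod isCompact_Icc
  exact ((continuousOn_F hc hp).integrableOn_compact hcomp).mono_set (Q_subset_R p)

lemma volume_Q (p : ℕ × ℕ) : volume (Q p) = 1 := by
  rw [Q, MeasureTheory.Measure.volume_eq_prod, MeasureTheory.Measure.prod_prod,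
    Real.volume_Ioc, Real.volume_Ioc]
  norm_num

lemma g_le_integral_Q {c : ℝ} (hc : 0 ≤ c) {p : ℕ × ℕ} (hp : cond p) :
    g c ((p.1 : ℝ) ^ 2 + (p.2 : ℝ) ^ 2) ≤ ∫ x in Q p, F c x := by
  have hf : ∀ x ∈ Q p, g c ((p.1 : ℝ) ^ 2 + (p.2 : ℝ) ^ 2) ≤ F c x := by
    intro x hx
    obtain ⟨h1, h2, h3, h4⟩ := Q_mem hp.1 hp.2.1 hx
    apply g_anti hc
    · nlinarith
    · nlinarith
  have h := setIntegral_ge_of_const_le (measurableSet_Q p)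
      (by rw [volume_Q]; exact ENNReal.one_ne_top) hf (integrableOn_F_Q hc hp)
  rw [measureReal_def, volume_Q] at h
  simpa using h

lemma Q_subset_W {p : ℕ × ℕ} (hp : cond p) : Q p ⊆ W := by
  intro x hx
  have h := R_one_le hp (Q_subset_R p hx)
  obtain ⟨h1, h2, h3, h4⟩ := Q_mem hp.1 hp.2.1 hx
  exact ⟨h1.le, h3.le, h⟩

lemma Q_disjoint {p q : ℕ × ℕ} (hpq : p ≠ q) : Disjoint (Q p) (Q q) := by
  have key : ∀ m n : ℕ, m ≠ n → Disjoint (Ioc ((m:ℝ)-1) (m:ℝ)) (Ioc ((n:ℝ)-1) (n:ℝ)) := by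
    intro m n hmn
    rw [Set.Ioc_disjoint_Ioc]
    rcases lt_or_gt_of_ne hmn with h | h
    · have h' : (m:ℝ) + 1 ≤ (n:ℝ) := by exact_mod_cast h
      exact le_trans (min_le_left _ _) (le_trans (by linarith) (le_max_right _ _))
    · have h' : (n:ℝ) + 1 ≤ (m:ℝ) := by exact_mod_cast h
      exact le_trans (min_le_right _ _) (le_trans (by linarith) (le_max_left _ _))
  have : p.1 ≠ q.1 ∨ p.2 ≠ q.2 := by
    by_contra hcon
    push_neg at hcon
    exact hpq (Prod.ext hcon.1 hcon.2)
  rw [Q, Q, Set.disjoint_prod]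
  rcases this with h | h
  · exact Or.inl (key _ _ h)
  · exact Or.inr (key _ _ h)

lemma measurableSet_W : MeasurableSet W := by
  have : W = {x : ℝ × ℝ | 0 ≤ x.1} ∩ ({x | 0 ≤ x.2} ∩ {x | 1 ≤ x.1 ^ 2 + x.2 ^ 2}) := rfl
  rw [this]
  exact (measurableSet_le measurable_const measurable_fst).inter
    ((measurableSet_le measurable_const measurable_snd).inter
      (measurableSet_le measurable_const (by measurability)))

lemma integral_J {c : ℝ} (hc : 0 < c) :
    ∫ r in Ioi (1:ℝ), r * g c (r ^ 2)
      = (16 * π ^ 2)⁻¹ * (Real.log (1 + c) - Real.log c - (1 + c)⁻¹) := by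
  set G : ℝ → ℝ := fun r =>
    (16 * π ^ 2)⁻¹ * (Real.log (c * r ^ 4) - Real.log (1 + c * r ^ 4) + (1 + c * r ^ 4)⁻¹)
    with hG
  have hderiv : ∀ x ∈ Ici (1:ℝ), HasDerivAt G (x * g c (x ^ 2)) x := by
    intro x hx
    have hx0 : (0:ℝ) < x := lt_of_lt_of_le one_pos hx
    have h4 : HasDerivAt (fun r : ℝ => c * r ^ 4) (c * (4 * x ^ 3)) x := by
      simpa using (hasDerivAt_pow 4 x).const_mul c
    have hpos1 : (0:ℝ) < c * x ^ 4 := by positivity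
    have hpos2 : (0:ℝ) < 1 + c * x ^ 4 := by positivity
    have h5 : HasDerivAt (fun r : ℝ => 1 + c * r ^ 4) (c * (4 * x ^ 3)) x := h4.const_add 1
    have hlog1 := h4.log (ne_of_gt hpos1)
    have hlog2 := h5.log (ne_of_gt hpos2)
    have hinv := h5.inv (ne_of_gt hpos2)
    have hGd := ((hlog1.sub hlog2).add hinv).const_mul ((16 * π ^ 2)⁻¹)
    convert hGd using 1
    · rfl
    · rfl
    · rfl
    rw [g]
    have hππ : (0:ℝ) < π := pi_pos
    field_simp
    ring
  have g'nonneg : ∀ x ∈ Ioi (1:ℝ), 0 ≤ x * g c (x ^ 2) := by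
    intro x hx
    have hx0 : (0:ℝ) < x := lt_trans one_pos hx
    exact mul_nonneg hx0.le (g_nonneg (sq_nonneg x))
  have htend : Filter.Tendsto G Filter.atTop (nhds 0) := by
    have h1 : Filter.Tendsto (fun r : ℝ => 1 + c * r ^ 4) Filter.atTop Filter.atTop := by
      apply Filter.tendsto_atTop_add_const_left
      exact Filter.Tendsto.const_mul_atTop hc (Filter.tendsto_pow_atTop (by norm_num))
    have h2 : Filter.Tendsto (fun r : ℝ => (1 + c * r ^ 4)⁻¹) Filter.atTop (nhds 0) :=
      h1.inv_tendsto_atTop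
    have h1' : Filter.Tendsto (fun r : ℝ => c * r ^ 4) Filter.atTop Filter.atTop :=
      Filter.Tendsto.const_mul_atTop hc (Filter.tendsto_pow_atTop (by norm_num))
    have h3 : Filter.Tendsto
        (fun r : ℝ => Real.log (c * r ^ 4) - Real.log (1 + c * r ^ 4))
        Filter.atTop (nhds 0) := by
      have hE : ∀ᶠ r in Filter.atTop,
          -Real.log (1 + (c * r ^ 4)⁻¹)
            = Real.log (c * r ^ 4) - Real.log (1 + c * r ^ 4) := by
        filter_upwards [Filter.eventually_gt_atTop (0:ℝ)] with r hr
        have hp : (0:ℝ) < c * r ^ 4 := by positivity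
        have hp2 : (0:ℝ) < 1 + c * r ^ 4 := by positivity
        rw [← Real.log_div (ne_of_gt hp) (ne_of_gt hp2)]
        have heq : (1 + (c * r ^ 4)⁻¹) = (c * r ^ 4 / (1 + c * r ^ 4))⁻¹ := by
          field_simp
          ring
        rw [heq, Real.log_inv, neg_neg]
      have h4 : Filter.Tendsto (fun r : ℝ => 1 + (c * r ^ 4)⁻¹) Filter.atTop (nhds 1) := by
        have := h1'.inv_tendsto_atTop
        have h5 := this.const_add (1:ℝ)
        simpa using h5
      have h6 : Filter.Tendsto (fun r : ℝ => -Real.log (1 + (c * r ^ 4)⁻¹))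
          Filter.atTop (nhds (-Real.log 1)) := by
        exact (((Real.continuousAt_log one_ne_zero).tendsto).comp h4).neg
      rw [Real.log_one, neg_zero] at h6
      exact Filter.Tendsto.congr' hE h6
    have h7 := (h3.add h2).const_mul ((16 * π ^ 2)⁻¹)
    simp only [add_zero, mul_zero] at h7
    exact h7
  have hval := integral_Ioi_of_hasDerivAt_of_nonneg' hderiv g'nonneg htend
  rw [hval, hG]
  simp only [one_pow, mul_one]
  ring

lemma measurable_F (c : ℝ) : Measurable (F c) := by
  have hq : Measurable fun x : ℝ × ℝ => x.1 ^ 2 + x.2 ^ 2 :=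
    (measurable_fst.pow_const 2).add (measurable_snd.pow_const 2)
  unfold F g
  exact ((((hq.pow_const 2).const_mul c).const_add 1).inv.pow_const 2).mul
    ((hq.const_mul (4 * π ^ 2)).inv)

lemma integrableOn_F_W {c : ℝ} (hc : 0 < c) : IntegrableOn (F c) W := by
  have hbig : ((Module.finrank ℝ (ℝ × ℝ)) : ℝ) < 10 := by
    simp [Module.finrank_prod]
    norm_num
  have hint := (integrable_one_add_norm (E := ℝ × ℝ) (μ := volume) hbig).const_mul
    (7776 * (4 * π ^ 2 * c ^ 2)⁻¹)
  apply Integrable.mono' (hint.restrict (s := W))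
    ((measurable_F c).aestronglyMeasurable.restrict)
  rw [ae_restrict_iff' measurableSet_W]
  apply Filter.Eventually.of_forall
  intro x hx
  obtain ⟨hx1, hx2, hm⟩ := hx
  set m : ℝ := x.1 ^ 2 + x.2 ^ 2 with hmdef
  have hm0 : (0:ℝ) < m := by nlinarith
  have hπ : (0:ℝ) < π := pi_pos
  have h1 : (1 + c * m ^ 2)⁻¹ ≤ (c * m ^ 2)⁻¹ := by
    apply inv_anti₀ (by positivity)
    linarith
  have h0 : (0:ℝ) ≤ (1 + c * m ^ 2)⁻¹ := by positivity
  have hsq : ((1 + c * m ^ 2)⁻¹) ^ 2 ≤ ((c * m ^ 2)⁻¹) ^ 2 := by nlinarith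
  have key1 : F c x ≤ (4 * π ^ 2 * c ^ 2)⁻¹ * (m ^ 5)⁻¹ := by
    have step : F c x ≤ ((c * m ^ 2)⁻¹) ^ 2 * (4 * π ^ 2 * m)⁻¹ := by
      rw [F, g]
      exact mul_le_mul_of_nonneg_right hsq (by positivity)
    refine step.trans_eq ?_
    rw [mul_inv, mul_inv, mul_inv]
    field_simp
  have hnorm : ‖x‖ ^ 2 ≤ 2 * m := by
    have hxn : ‖x‖ ≤ |x.1| + |x.2| := by
      rw [Prod.norm_def, Real.norm_eq_abs, Real.norm_eq_abs]
      exact max_le (le_add_of_nonneg_right (abs_nonneg _))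
        (le_add_of_nonneg_left (abs_nonneg _))
    have h2 : (|x.1| + |x.2|) ^ 2 ≤ 2 * m := by
      nlinarith [sq_nonneg (|x.1| - |x.2|), sq_abs x.1, sq_abs x.2]
    nlinarith [norm_nonneg x]
  have h6m : (1 + ‖x‖) ^ 2 ≤ 6 * m := by
    nlinarith [norm_nonneg x, sq_nonneg (1 - ‖x‖)]
  have h10 : (1 + ‖x‖) ^ (10:ℕ) ≤ 7776 * m ^ 5 := by
    have := pow_le_pow_left₀ (by positivity : (0:ℝ) ≤ (1 + ‖x‖) ^ 2) h6m 5
    calc (1 + ‖x‖) ^ (10:ℕ) = ((1 + ‖x‖) ^ 2) ^ 5 := by ring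
    _ ≤ (6 * m) ^ 5 := this
    _ = 7776 * m ^ 5 := by ring
  have hmono : (7776 * m ^ 5)⁻¹ ≤ ((1 + ‖x‖) ^ (10:ℕ))⁻¹ :=
    inv_anti₀ (by positivity) h10
  rw [Real.norm_eq_abs, abs_of_nonneg (F_nonneg _ _)]
  have hrpow : (1 + ‖x‖) ^ (-(10:ℝ)) = ((1 + ‖x‖) ^ (10:ℕ))⁻¹ := by
    rw [show (-(10:ℝ)) = -((10:ℕ):ℝ) by norm_num,
      Real.rpow_neg (by positivity), Real.rpow_natCast]
  rw [hrpow]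
  calc F c x ≤ (4 * π ^ 2 * c ^ 2)⁻¹ * (m ^ 5)⁻¹ := key1
  _ = 7776 * (4 * π ^ 2 * c ^ 2)⁻¹ * (7776 * m ^ 5)⁻¹ := by
      field_simp
  _ ≤ 7776 * (4 * π ^ 2 * c ^ 2)⁻¹ * ((1 + ‖x‖) ^ (10:ℕ))⁻¹ :=
      mul_le_mul_of_nonneg_left hmono (by positivity)

lemma integral_W {c : ℝ} (hc : 0 < c) :
    ∫ x in W, F c x = (∫ r in Ioi (1:ℝ), r * g c (r ^ 2)) * (π / 2) := by
  have hπ : (0:ℝ) < π := pi_pos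
  have key := integral_comp_polarCoord_symm (W.indicator (F c))
  rw [MeasureTheory.integral_indicator measurableSet_W] at key
  rw [← key]
  have hS : MeasurableSet (Ici (1:ℝ) ×ˢ Icc (0:ℝ) (π/2)) :=
    measurableSet_Ici.prod measurableSet_Icc
  have htarget : polarCoord.target = Ioi (0:ℝ) ×ˢ Ioo (-π) π := rfl
  have hsub : (Ici (1:ℝ) ×ˢ Icc (0:ℝ) (π/2)) ⊆ polarCoord.target := by
    rw [htarget]
    intro p hp
    obtain ⟨hp1, hp2⟩ := hp
    simp only [mem_Ici] at hp1
    simp only [mem_Icc] at hp2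
    constructor
    · exact lt_of_lt_of_le one_pos hp1
    · constructor
      · linarith [hp2.1]
      · linarith [hp2.2]
  have tmeas : MeasurableSet polarCoord.target := by
    rw [htarget]; exact measurableSet_Ioi.prod measurableSet_Ioo
  have heq : ∀ p ∈ polarCoord.target,
      p.1 • (W.indicator (F c)) (polarCoord.symm p)
        = (Ici (1:ℝ) ×ˢ Icc (0:ℝ) (π/2)).indicator (fun q : ℝ × ℝ => q.1 * g c (q.1 ^ 2)) p := by
    intro p hp
    rw [htarget] at hp
    obtain ⟨hp1, hp2⟩ := hp
    simp only [mem_Ioi] at hp1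
    simp only [mem_Ioo] at hp2
    have hsymm : polarCoord.symm p = (p.1 * Real.cos p.2, p.1 * Real.sin p.2) := rfl
    have hsq : (p.1 * Real.cos p.2) ^ 2 + (p.1 * Real.sin p.2) ^ 2 = p.1 ^ 2 := by
      have h := Real.sin_sq_add_cos_sq p.2
      nlinarith [h]
    have hiff : polarCoord.symm p ∈ W ↔ p ∈ Ici (1:ℝ) ×ˢ Icc (0:ℝ) (π/2) := by
      rw [hsymm]
      constructor
      · rintro ⟨h1, h2, h3⟩
        simp only at h1 h2 h3
        rw [hsq] at h3
        have hsin : 0 ≤ Real.sin p.2 := by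
          by_contra hneg
          push_neg at hneg
          nlinarith
        have hcos : 0 ≤ Real.cos p.2 := by
          by_contra hneg
          push_neg at hneg
          nlinarith
        have hθ0 : 0 ≤ p.2 := by
          by_contra hneg
          push_neg at hneg
          have := Real.sin_neg_of_neg_of_neg_pi_lt hneg hp2.1
          linarith
        have hθπ2 : p.2 ≤ π / 2 := by
          by_contra hneg
          push_neg at hneg
          have := Real.cos_neg_of_pi_div_two_lt_of_lt hneg (by linarith)
          linarith
        have hr1 : 1 ≤ p.1 := by nlinarith
        exact ⟨hr1, hθ0, hθπ2⟩
      · rintro ⟨hr1, hθ⟩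
        simp only [mem_Ici] at hr1
        simp only [mem_Icc] at hθ
        have hsin : 0 ≤ Real.sin p.2 :=
          Real.sin_nonneg_of_nonneg_of_le_pi hθ.1 (by linarith)
        have hcos : 0 ≤ Real.cos p.2 :=
          Real.cos_nonneg_of_mem_Icc ⟨by linarith, hθ.2⟩
        refine ⟨mul_nonneg hp1.le hcos, mul_nonneg hp1.le hsin, ?_⟩
        simp only
        nlinarith [hsq]
    by_cases hmem : p ∈ Ici (1:ℝ) ×ˢ Icc (0:ℝ) (π/2)
    · rw [Set.indicator_of_mem (hiff.2 hmem), Set.indicator_of_mem hmem, hsymm]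
      show p.1 • g c ((p.1 * Real.cos p.2) ^ 2 + (p.1 * Real.sin p.2) ^ 2)
        = p.1 * g c (p.1 ^ 2)
      rw [hsq, smul_eq_mul]
    · rw [Set.indicator_of_notMem (fun h => hmem (hiff.1 h)),
        Set.indicator_of_notMem hmem, smul_zero]
  have e1 := setIntegral_congr_fun (μ := volume) tmeas (fun p hp => heq p hp)
  rw [e1, MeasureTheory.setIntegral_indicator hS,
    Set.inter_eq_self_of_subset_right hsub]
  have e15 : (fun q : ℝ × ℝ => q.1 * g c (q.1 ^ 2))
      = fun q : ℝ × ℝ => (fun r : ℝ => r * g c (r ^ 2)) q.1 * (fun _ : ℝ => (1:ℝ)) q.2 := by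
    funext q
    simp
  rw [e15, MeasureTheory.Measure.volume_eq_prod]
  have e3 := MeasureTheory.setIntegral_prod_mul (μ := volume) (ν := volume)
    (fun r : ℝ => r * g c (r ^ 2)) (fun _ : ℝ => (1:ℝ)) (Ici (1:ℝ)) (Icc (0:ℝ) (π/2))
  rw [e3]
  have e2 : (∫ _ in Icc (0:ℝ) (π/2), (1:ℝ)) = π / 2 := by
    rw [MeasureTheory.setIntegral_const, measureReal_def, Real.volume_Icc, smul_eq_mul, mul_one,
      ENNReal.toReal_ofReal (by linarith [pi_pos] : (0:ℝ) ≤ π/2 - 0)]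
    ring
  rw [e2, MeasureTheory.integral_Ici_eq_integral_Ioi]

lemma sum_le_card_nsmul_image {α β : Type*} [DecidableEq β] (s : Finset α) (ν : α → β)
    (f : β → ℝ) (hf : ∀ b, 0 ≤ f b) (N : ℕ)
    (hN : ∀ b ∈ s.image ν, (s.filter fun a => ν a = b).card ≤ N) :
    ∑ a ∈ s, f (ν a) ≤ N * ∑ b ∈ s.image ν, f b := by
  rw [← Finset.sum_fiberwise_of_maps_to (fun a ha => Finset.mem_image_of_mem ν ha)
    (fun a => f (ν a)), Finset.mul_sum]
  apply Finset.sum_le_sum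
  intro b hb
  have h1 : ∑ a ∈ s.filter (fun a => ν a = b), f (ν a)
      = ∑ _a ∈ s.filter (fun a => ν a = b), f b :=
    Finset.sum_congr rfl fun a ha => by rw [(Finset.mem_filter.1 ha).2]
  rw [h1, Finset.sum_const, nsmul_eq_mul]
  exact mul_le_mul_of_nonneg_right (by exact_mod_cast Nat.cast_le.2 (hN b hb)) (hf b)

lemma summable_wn : Summable (fun n : ℕ => ((n:ℝ) ^ 2)⁻¹) := by
  have h := (Real.summable_nat_pow_inv (p := 2)).2 one_lt_two
  exact h

lemma tsum_wn : ∑' n : ℕ, ((n:ℝ) ^ 2)⁻¹ = π ^ 2 / 6 := by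
  have h := hasSum_zeta_two
  rw [← h.tsum_eq]
  exact tsum_congr fun n => (one_div _).symm

lemma natAbs_cast_sq (n : ℤ) : ((n.natAbs : ℝ)) ^ 2 = ((n:ℝ)) ^ 2 := by
  simp [Nat.cast_natAbs, Int.cast_abs, sq_abs]

lemma finsetSum_le {τ σ : ℝ} (hσ : 0 < σ) (hστ : σ ≤ τ) (s : Finset (ℤ × ℤ)) :
    ∑ k ∈ s, aterm τ k ≤
      1/6 + (2*π^2)⁻¹ +
        4 * ((∫ r in Ioi (1:ℝ), r * g (16*π^4*σ) (r^2)) * (π/2)) := by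
  classical
  have hπ : (0:ℝ) < π := pi_pos
  set c := 16*π^4*σ with hcdef
  have hc : 0 < c := by positivity
  have hτ0 : (0:ℝ) ≤ τ := le_trans hσ.le hστ
  set b1 : ℤ × ℤ → ℝ :=
    fun k => if k.2 = 0 then (4*π^2)⁻¹ * ((k.1.natAbs : ℝ)^2)⁻¹ else 0 with hb1def
  set b2 : ℤ × ℤ → ℝ :=
    fun k => if k.1 = 0 ∧ k.2 ≠ 0 then (4*π^2)⁻¹ * ((k.2.natAbs : ℝ)^2)⁻¹ else 0 with hb2def
  set b3 : ℤ × ℤ → ℝ :=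
    fun k => if k.1.natAbs = 1 ∧ k.2.natAbs = 1 then (8*π^2)⁻¹ else 0 with hb3def
  set b4 : ℤ × ℤ → ℝ :=
    fun k => if k.1 ≠ 0 ∧ k.2 ≠ 0 ∧ ¬(k.1.natAbs = 1 ∧ k.2.natAbs = 1)
      then ∫ x in Q (k.1.natAbs, k.2.natAbs), F c x else 0 with hb4def
  have hb1n : ∀ k, 0 ≤ b1 k := by
    intro k; rw [hb1def]; dsimp only; split
    · positivity
    · exact le_refl 0
  have hb2n : ∀ k, 0 ≤ b2 k := by
    intro k; rw [hb2def]; dsimp only; split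
    · positivity
    · exact le_refl 0
  have hb3n : ∀ k, 0 ≤ b3 k := by
    intro k; rw [hb3def]; dsimp only; split
    · positivity
    · exact le_refl 0
  have hb4n : ∀ k, 0 ≤ b4 k := by
    intro k; rw [hb4def]; dsimp only; split
    · exact MeasureTheory.setIntegral_nonneg (measurableSet_Q _) (fun x _ => F_nonneg c x)
    · exact le_refl 0
  have hpoint : ∀ k : ℤ × ℤ, aterm τ k ≤ b1 k + b2 k + b3 k + b4 k := by
    intro k
    by_cases h2 : k.2 = 0
    · have e1 : b1 k = (4*π^2)⁻¹ * ((k.1.natAbs : ℝ)^2)⁻¹ := if_pos h2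
      have key : aterm τ k ≤ b1 k := by
        by_cases h1 : k.1 = 0
        · have hk0 : k = 0 := Prod.ext h1 h2
          rw [hk0]
          simp only [aterm, ne_eq, not_true_eq_false, if_false, ite_false]
          simp only [hk0] at e1
          rw [e1]
          positivity
        · have hb := aterm_le_basic hτ0 k
          rw [e1]
          have hk2 : ((k.2 : ℝ)) = 0 := by exact_mod_cast h2
          rw [hk2] at hb
          have : (4 * π ^ 2 * ((k.1:ℝ) ^ 2 + 0 ^ 2))⁻¹
              = (4*π^2)⁻¹ * ((k.1.natAbs : ℝ)^2)⁻¹ := by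
            rw [natAbs_cast_sq, mul_inv]
            norm_num
          rw [this] at hb
          exact hb
      linarith [hb2n k, hb3n k, hb4n k]
    · by_cases h1 : k.1 = 0
      · have e1 : b2 k = (4*π^2)⁻¹ * ((k.2.natAbs : ℝ)^2)⁻¹ := if_pos ⟨h1, h2⟩
        have key : aterm τ k ≤ b2 k := by
          have hb := aterm_le_basic hτ0 k
          rw [e1]
          have hk1 : ((k.1 : ℝ)) = 0 := by exact_mod_cast h1
          rw [hk1] at hb
          have : (4 * π ^ 2 * (0 ^ 2 + (k.2:ℝ) ^ 2))⁻¹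
              = (4*π^2)⁻¹ * ((k.2.natAbs : ℝ)^2)⁻¹ := by
            rw [natAbs_cast_sq, mul_inv]
            norm_num
          rw [this] at hb
          exact hb
        linarith [hb1n k, hb3n k, hb4n k]
      · by_cases h3 : k.1.natAbs = 1 ∧ k.2.natAbs = 1
        · have e1 : b3 k = (8*π^2)⁻¹ := if_pos h3
          have key : aterm τ k ≤ b3 k := by
            have hb := aterm_le_basic hτ0 k
            rw [e1]
            have hs1 : ((k.1:ℝ)) ^ 2 = 1 := by
              rw [← natAbs_cast_sq, h3.1]; norm_num
            have hs2 : ((k.2:ℝ)) ^ 2 = 1 := by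
              rw [← natAbs_cast_sq, h3.2]; norm_num
            rw [hs1, hs2] at hb
            have : (4 * π ^ 2 * ((1:ℝ) + 1))⁻¹ = (8*π^2)⁻¹ := by norm_num; ring_nf
            rw [this] at hb
            exact hb
          linarith [hb1n k, hb2n k, hb4n k]
        · have e1 : b4 k = ∫ x in Q (k.1.natAbs, k.2.natAbs), F c x := if_pos ⟨h1, h2, h3⟩
          have key : aterm τ k ≤ b4 k := by
            have hb := aterm_le_g hσ.le hστ k
            rw [e1]
            have hcond : cond (k.1.natAbs, k.2.natAbs) :=
              ⟨Int.natAbs_pos.2 h1, Int.natAbs_pos.2 h2, h3⟩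
            have hQ := g_le_integral_Q hc.le hcond
            have hrw : ((k.1.natAbs : ℝ))^2 + ((k.2.natAbs : ℝ))^2
                = ((k.1:ℝ))^2 + ((k.2:ℝ))^2 := by
              rw [natAbs_cast_sq, natAbs_cast_sq]
            rw [hrw] at hQ
            exact le_trans hb hQ
          linarith [hb1n k, hb2n k, hb3n k]
  -- axis sums
  have hzeta : Summable (fun m : ℕ => (4*π^2)⁻¹ * ((m:ℝ)^2)⁻¹) := summable_wn.mul_left _
  have hzval : 2 * ((4*π^2)⁻¹ * (π^2/6)) = 1/12 := by
    field_simp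
    ring
  have hS1 : ∑ k ∈ s, b1 k ≤ 1/12 := by
    have e : ∑ k ∈ s, b1 k = ∑ k ∈ s.filter (fun k => k.2 = 0),
        (fun m : ℕ => (4*π^2)⁻¹ * ((m:ℝ)^2)⁻¹) (k.1.natAbs) := by
      simp only [hb1def]
      rw [← Finset.sum_filter]
    rw [e]
    have hfib : ∀ b ∈ (s.filter (fun k => k.2 = 0)).image (fun k => k.1.natAbs),
        ((s.filter (fun k => k.2 = 0)).filter (fun k => k.1.natAbs = b)).card ≤ 2 := by
      intro b _
      have hsub : (s.filter (fun k => k.2 = 0)).filter (fun k => k.1.natAbs = b)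
          ⊆ {((b:ℤ), (0:ℤ)), (-(b:ℤ), (0:ℤ))} := by
        intro k hk
        simp only [Finset.mem_filter] at hk
        obtain ⟨⟨_, hk2⟩, hkb⟩ := hk
        simp only [Finset.mem_insert, Finset.mem_singleton]
        rcases Int.natAbs_eq_iff.mp hkb with h | h
        · left; exact Prod.ext h hk2
        · right; exact Prod.ext h hk2
      exact le_trans (Finset.card_le_card hsub)
        (le_trans (Finset.card_insert_le _ _) (by simp))
    refine le_trans (sum_le_card_nsmul_image (s.filter (fun k => k.2 = 0))
      (fun k => k.1.natAbs) (fun m : ℕ => (4*π^2)⁻¹ * ((m:ℝ)^2)⁻¹)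
      (fun b => by positivity) 2 hfib) ?_
    have hts := Summable.sum_le_tsum ((s.filter (fun k => k.2 = 0)).image (fun k => k.1.natAbs))
      (fun b _ => by positivity) hzeta
    rw [tsum_mul_left, tsum_wn] at hts
    push_cast
    linarith
  have hS2 : ∑ k ∈ s, b2 k ≤ 1/12 := by
    have e : ∑ k ∈ s, b2 k = ∑ k ∈ s.filter (fun k => k.1 = 0 ∧ k.2 ≠ 0),
        (fun m : ℕ => (4*π^2)⁻¹ * ((m:ℝ)^2)⁻¹) (k.2.natAbs) := by
      simp only [hb2def]
      rw [← Finset.sum_filter]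
    rw [e]
    have hfib : ∀ b ∈ (s.filter (fun k => k.1 = 0 ∧ k.2 ≠ 0)).image (fun k => k.2.natAbs),
        ((s.filter (fun k => k.1 = 0 ∧ k.2 ≠ 0)).filter (fun k => k.2.natAbs = b)).card ≤ 2 := by
      intro b _
      have hsub : (s.filter (fun k => k.1 = 0 ∧ k.2 ≠ 0)).filter (fun k => k.2.natAbs = b)
          ⊆ {((0:ℤ), (b:ℤ)), ((0:ℤ), -(b:ℤ))} := by
        intro k hk
        simp only [Finset.mem_filter] at hk
        obtain ⟨⟨_, hk1, _⟩, hkb⟩ := hk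
        simp only [Finset.mem_insert, Finset.mem_singleton]
        rcases Int.natAbs_eq_iff.mp hkb with h | h
        · left; exact Prod.ext hk1 h
        · right; exact Prod.ext hk1 h
      exact le_trans (Finset.card_le_card hsub)
        (le_trans (Finset.card_insert_le _ _) (by simp))
    refine le_trans (sum_le_card_nsmul_image (s.filter (fun k => k.1 = 0 ∧ k.2 ≠ 0))
      (fun k => k.2.natAbs) (fun m : ℕ => (4*π^2)⁻¹ * ((m:ℝ)^2)⁻¹)
      (fun b => by positivity) 2 hfib) ?_
    have hts := Summable.sum_le_tsum ((s.filter (fun k => k.1 = 0 ∧ k.2 ≠ 0)).image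
        (fun k => k.2.natAbs))
      (fun b _ => by positivity) hzeta
    rw [tsum_mul_left, tsum_wn] at hts
    push_cast
    linarith
  have hS3 : ∑ k ∈ s, b3 k ≤ (2*π^2)⁻¹ := by
    have e : ∑ k ∈ s, b3 k
        = ∑ _k ∈ s.filter (fun k => k.1.natAbs = 1 ∧ k.2.natAbs = 1), (8*π^2)⁻¹ := by
      simp only [hb3def]
      rw [← Finset.sum_filter]
    rw [e, Finset.sum_const, nsmul_eq_mul]
    have hsub : s.filter (fun k => k.1.natAbs = 1 ∧ k.2.natAbs = 1)
        ⊆ ({((1:ℤ),(1:ℤ)), ((1:ℤ),(-1:ℤ)), ((-1:ℤ),(1:ℤ)), ((-1:ℤ),(-1:ℤ))} :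
            Finset (ℤ × ℤ)) := by
      intro k hk
      simp only [Finset.mem_filter] at hk
      obtain ⟨_, hk1, hk2⟩ := hk
      have h1 : k.1 = 1 ∨ k.1 = -1 := by
        rcases Int.natAbs_eq_iff.mp hk1 with h | h
        · left; exact_mod_cast h
        · right; exact_mod_cast h
      have h2 : k.2 = 1 ∨ k.2 = -1 := by
        rcases Int.natAbs_eq_iff.mp hk2 with h | h
        · left; exact_mod_cast h
        · right; exact_mod_cast h
      simp only [Finset.mem_insert, Finset.mem_singleton, Prod.ext_iff]
      rcases h1 with h1 | h1 <;> rcases h2 with h2 | h2 <;> simp [h1, h2]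
    have hcard : (s.filter (fun k => k.1.natAbs = 1 ∧ k.2.natAbs = 1)).card ≤ 4 := by
      refine le_trans (Finset.card_le_card hsub) ?_
      refine le_trans (Finset.card_insert_le _ _) ?_
      refine Nat.succ_le_succ ?_
      refine le_trans (Finset.card_insert_le _ _) ?_
      refine Nat.succ_le_succ ?_
      refine le_trans (Finset.card_insert_le _ _) ?_
      simp
    have hc4 : ((s.filter (fun k => k.1.natAbs = 1 ∧ k.2.natAbs = 1)).card : ℝ) ≤ 4 := by
      exact_mod_cast hcard
    have harith : (4:ℝ) * (8*π^2)⁻¹ = (2*π^2)⁻¹ := by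
      field_simp
      ring
    calc ((s.filter (fun k => k.1.natAbs = 1 ∧ k.2.natAbs = 1)).card : ℝ) * (8*π^2)⁻¹
        ≤ 4 * (8*π^2)⁻¹ := mul_le_mul_of_nonneg_right hc4 (by positivity)
    _ = (2*π^2)⁻¹ := harith
  have hS4 : ∑ k ∈ s, b4 k ≤ 4 * ∫ x in W, F c x := by
    set P4 : ℤ × ℤ → Prop :=
      fun k => k.1 ≠ 0 ∧ k.2 ≠ 0 ∧ ¬(k.1.natAbs = 1 ∧ k.2.natAbs = 1) with hP4def
    set s4 := s.filter P4 with hs4def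
    set ν : ℤ × ℤ → ℕ × ℕ := fun k => (k.1.natAbs, k.2.natAbs) with hνdef
    set f4 : ℕ × ℕ → ℝ := fun p => ∫ x in Q p, F c x with hf4def
    have e : ∑ k ∈ s, b4 k = ∑ k ∈ s4, f4 (ν k) := by
      simp only [hb4def, hf4def, hνdef, hs4def, hP4def]
      rw [← Finset.sum_filter]
    rw [e]
    have hf4n : ∀ p, 0 ≤ f4 p := fun p =>
      MeasureTheory.setIntegral_nonneg (measurableSet_Q p) (fun x _ => F_nonneg c x)
    have hcondt : ∀ p ∈ s4.image ν, cond p := by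
      intro p hp
      obtain ⟨k, hk, rfl⟩ := Finset.mem_image.mp hp
      have hk4 : P4 k := (Finset.mem_filter.mp hk).2
      exact ⟨Int.natAbs_pos.2 hk4.1, Int.natAbs_pos.2 hk4.2.1, hk4.2.2⟩
    have hfib : ∀ b ∈ s4.image ν, (s4.filter fun a => ν a = b).card ≤ 4 := by
      intro b _
      have hsub : s4.filter (fun a => ν a = b)
          ⊆ ({((b.1:ℤ),(b.2:ℤ)), ((b.1:ℤ),-(b.2:ℤ)), (-(b.1:ℤ),(b.2:ℤ)),
              (-(b.1:ℤ),-(b.2:ℤ))} : Finset (ℤ × ℤ)) := by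
        intro k hk
        obtain ⟨_, hkb⟩ := Finset.mem_filter.mp hk
        rw [hνdef] at hkb
        have hk1 : k.1.natAbs = b.1 := by rw [← hkb]
        have hk2 : k.2.natAbs = b.2 := by rw [← hkb]
        have h1 := Int.natAbs_eq_iff.mp hk1
        have h2 := Int.natAbs_eq_iff.mp hk2
        simp only [Finset.mem_insert, Finset.mem_singleton, Prod.ext_iff]
        rcases h1 with h1 | h1 <;> rcases h2 with h2 | h2 <;> simp [h1, h2]
      refine le_trans (Finset.card_le_card hsub) ?_
      refine le_trans (Finset.card_insert_le _ _) ?_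
      refine Nat.succ_le_succ ?_
      refine le_trans (Finset.card_insert_le _ _) ?_
      refine Nat.succ_le_succ ?_
      refine le_trans (Finset.card_insert_le _ _) ?_
      simp
    refine le_trans (sum_le_card_nsmul_image s4 ν f4 hf4n 4 hfib) ?_
    have hunion : ∑ p ∈ s4.image ν, f4 p = ∫ x in ⋃ p ∈ s4.image ν, Q p, F c x := by
      exact (MeasureTheory.integral_biUnion_finset (s4.image ν)
        (fun p _ => measurableSet_Q p)
        (fun p _ q _ hpq => Q_disjoint hpq)
        (fun p hp => integrableOn_F_Q hc.le (hcondt p hp))).symm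
    have hsubW : (⋃ p ∈ s4.image ν, Q p) ⊆ W :=
      Set.iUnion₂_subset (fun p hp => Q_subset_W (hcondt p hp))
    have hmono := MeasureTheory.setIntegral_mono_set (integrableOn_F_W hc)
      (Filter.Eventually.of_forall (fun x => F_nonneg c x))
      (HasSubset.Subset.eventuallyLE hsubW)
    have hfin : ∑ p ∈ s4.image ν, f4 p ≤ ∫ x in W, F c x := by
      rw [hunion]
      exact hmono
    push_cast
    linarith
  calc ∑ k ∈ s, aterm τ k ≤ ∑ k ∈ s, (b1 k + b2 k + b3 k + b4 k) :=
      Finset.sum_le_sum fun k _ => hpoint k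
  _ = (∑ k ∈ s, b1 k) + (∑ k ∈ s, b2 k) + (∑ k ∈ s, b3 k) + (∑ k ∈ s, b4 k) := by
      rw [Finset.sum_add_distrib, Finset.sum_add_distrib, Finset.sum_add_distrib]
  _ ≤ 1/12 + 1/12 + (2*π^2)⁻¹ + 4 * ∫ x in W, F c x :=
      add_le_add (add_le_add (add_le_add hS1 hS2) hS3) hS4
  _ = 1/6 + (2*π^2)⁻¹ + 4 * ((∫ r in Ioi (1:ℝ), r * g c (r^2)) * (π/2)) := by
      rw [integral_W hc]
      ring

lemma master {τ σ : ℝ} (hσ : 0 < σ) (hστ : σ ≤ τ) (hσ16 : 16*π^4*σ ≤ 1/16) :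
    (∑' k : ℤ × ℤ, aterm τ k) ≤
      1/6 + (2*π^2)⁻¹ + (8*π)⁻¹ *
        (Real.log (1 + 16*π^4*σ) - Real.log (16*π^4*σ) - (1 + 16*π^4*σ)⁻¹) := by
  have hπ : (0:ℝ) < π := pi_pos
  set c := 16*π^4*σ with hcdef
  have hc : 0 < c := by positivity
  have hL1 : (1:ℝ) ≤ Real.log (1+c) - Real.log c := by
    rw [← Real.log_div (show ((1:ℝ)+c) ≠ 0 by positivity) hc.ne']
    rw [Real.le_log_iff_exp_le (by positivity)]
    have he := Real.exp_one_lt_d9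
    have h17 : (17:ℝ) ≤ (1+c)/c := by
      rw [le_div_iff₀ hc]
      linarith
    linarith
  have hinvle : (1+c)⁻¹ ≤ 1 := by
    apply inv_le_one_of_one_le₀
    linarith
  have hB0 : 0 ≤ 1/6 + (2*π^2)⁻¹ + (8*π)⁻¹ *
      (Real.log (1+c) - Real.log c - (1+c)⁻¹) := by
    have h1 : (0:ℝ) ≤ (8*π)⁻¹ := by positivity
    have h2 : 0 ≤ Real.log (1+c) - Real.log c - (1+c)⁻¹ := by linarith
    have h3 : (0:ℝ) ≤ (2*π^2)⁻¹ := by positivity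
    have h4 := mul_nonneg h1 h2
    linarith
  apply tsum_le_of_sum_le' hB0
  intro s
  refine le_trans (finsetSum_le hσ hστ s) ?_
  rw [integral_J hc]
  have harith : 4 * (((16*π^2)⁻¹ * (Real.log (1+c) - Real.log c - (1+c)⁻¹)) * (π/2))
      = (8*π)⁻¹ * (Real.log (1+c) - Real.log c - (1+c)⁻¹) := by
    field_simp
    ring
  rw [harith]

end Stmt19Aux

/-- explicit bounds for
`(Σ_{k≠0} (1+τ(2π|k|)⁴)⁻² (2π|k|)⁻²)^{1/2}`: at most
`(-(1/(8π)) ln τ + 0.52)^{1/2}` when `0 < τ ≤ (4π)⁻⁴`, and at most `0.8803`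
when `τ > (4π)⁻⁴`. -/
theorem stmt19 (τ : ℝ) (hτ : 0 < τ) :
    (τ ≤ ((4 * π) ^ 4)⁻¹ →
      Real.sqrt (∑' k : ℤ × ℤ,
          if k ≠ 0 then
            ((1 + τ * (2 * π * kn2 k) ^ 4)⁻¹) ^ 2 * ((2 * π * kn2 k) ^ 2)⁻¹
          else 0) ≤
        Real.sqrt (-(1 / (8 * π)) * Real.log τ + 0.52)) ∧
    (((4 * π) ^ 4)⁻¹ < τ →
      Real.sqrt (∑' k : ℤ × ℤ,
          if k ≠ 0 then
            ((1 + τ * (2 * π * kn2 k) ^ 4)⁻¹) ^ 2 * ((2 * π * kn2 k) ^ 2)⁻¹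
          else 0) ≤ 0.8803) := by
  have hπ : (0:ℝ) < π := Real.pi_pos
  have hπ3 : (3:ℝ) < π := Real.pi_gt_three
  have h8π : (8*π)⁻¹ ≤ 1/24 := by
    rw [show (1:ℝ)/24 = (24:ℝ)⁻¹ by norm_num]
    apply inv_anti₀ (by norm_num)
    linarith
  have h2π2 : (2*π^2)⁻¹ ≤ 1/18 := by
    rw [show (1:ℝ)/18 = (18:ℝ)⁻¹ by norm_num]
    apply inv_anti₀ (by norm_num)
    nlinarith
  have heq256 : (4*π)^4 = 256*π^4 := by ring
  have h8π0 : (0:ℝ) ≤ (8*π)⁻¹ := by positivity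
  constructor
  · intro hcase
    apply Real.sqrt_le_sqrt
    show (∑' k : ℤ × ℤ, Stmt19Aux.aterm τ k) ≤ _
    have hc16 : 16*π^4*τ ≤ 1/16 := by
      have h1 : 16*π^4*τ ≤ 16*π^4*((4*π)^4)⁻¹ :=
        mul_le_mul_of_nonneg_left hcase (by positivity)
      have h2 : 16*π^4*((4*π)^4)⁻¹ = 1/16 := by
        rw [heq256]
        field_simp
        ring
      linarith
    have hm := Stmt19Aux.master hτ le_rfl hc16
    refine le_trans hm ?_
    set c := 16*π^4*τ with hcdef
    have hc : 0 < c := by positivity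
    have hlogc : Real.log c = Real.log (16*π^4) + Real.log τ :=
      Real.log_mul (by positivity) hτ.ne'
    have hp2 : (9:ℝ) ≤ π^2 := by nlinarith
    have hp4 : (81:ℝ) ≤ π^4 := by nlinarith
    have h16 : 0 ≤ Real.log (16*π^4) := Real.log_nonneg (by nlinarith)
    have hlog1c : Real.log (1+c) ≤ c := by
      have h := Real.log_le_sub_one_of_pos (show (0:ℝ) < 1+c by positivity)
      linarith
    have hinv0 : (0:ℝ) ≤ (1+c)⁻¹ := by positivity
    have hA : Real.log (1+c) - Real.log (16*π^4) - (1+c)⁻¹ ≤ 1/16 := by linarith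
    have hprod : (8*π)⁻¹ * (Real.log (1+c) - Real.log (16*π^4) - (1+c)⁻¹) ≤ 1/384 := by
      calc (8*π)⁻¹ * (Real.log (1+c) - Real.log (16*π^4) - (1+c)⁻¹)
          ≤ (8*π)⁻¹ * (1/16) := mul_le_mul_of_nonneg_left hA h8π0
      _ ≤ (1/24) * (1/16) := mul_le_mul_of_nonneg_right h8π (by norm_num)
      _ = 1/384 := by norm_num
    have hexp : 1/6 + (2*π^2)⁻¹ + (8*π)⁻¹ * (Real.log (1+c) - Real.log c - (1+c)⁻¹)
        = 1/6 + (2*π^2)⁻¹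
          + ((8*π)⁻¹ * (Real.log (1+c) - Real.log (16*π^4) - (1+c)⁻¹)
             - (8*π)⁻¹ * Real.log τ) := by
      rw [hlogc]
      ring
    rw [hexp]
    have hres : -(1/(8*π)) * Real.log τ = -((8*π)⁻¹ * Real.log τ) := by
      rw [one_div]
      ring
    rw [hres]
    linarith
  · intro hcase
    have hσpos : (0:ℝ) < ((4*π)^4)⁻¹ := by positivity
    have h2 : 16*π^4*((4*π)^4)⁻¹ = 1/16 := by
      rw [heq256]
      field_simp
      ring
    have hm := Stmt19Aux.master hσpos hcase.le (le_of_eq h2)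
    rw [h2] at hm
    have hlog116 : Real.log (1 + 1/16 : ℝ) ≤ 1/16 := by
      have h := Real.log_le_sub_one_of_pos (show (0:ℝ) < 1 + 1/16 by norm_num)
      linarith
    have hlog16 : Real.log (1/16 : ℝ) = -(4 * Real.log 2) := by
      rw [show (1:ℝ)/16 = ((2:ℝ)^4)⁻¹ by norm_num, Real.log_inv, Real.log_pow]
      norm_num
    have hlog2 : Real.log 2 < 0.6931472 := by
      have := Real.log_two_lt_d9
      linarith
    have hinv0 : (0:ℝ) ≤ ((1:ℝ) + 1/16)⁻¹ := by norm_num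
    have hbr : Real.log (1 + 1/16 : ℝ) - Real.log (1/16 : ℝ) - ((1:ℝ) + 1/16)⁻¹
        ≤ 2.8351 := by
      rw [hlog16]
      linarith
    have hprod : (8*π)⁻¹ * (Real.log (1 + 1/16 : ℝ) - Real.log (1/16 : ℝ)
        - ((1:ℝ) + 1/16)⁻¹) ≤ (1/24) * 2.8351 := by
      calc (8*π)⁻¹ * (Real.log (1 + 1/16 : ℝ) - Real.log (1/16 : ℝ) - ((1:ℝ) + 1/16)⁻¹)
          ≤ (8*π)⁻¹ * 2.8351 := mul_le_mul_of_nonneg_left hbr h8π0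
      _ ≤ (1/24) * 2.8351 := mul_le_mul_of_nonneg_right h8π (by norm_num)
    have hfinal : (∑' k : ℤ × ℤ, Stmt19Aux.aterm τ k) ≤ (0.8803:ℝ)^2 := by
      refine le_trans hm ?_
      have hnum : (1:ℝ)/6 + 1/18 + (1/24) * 2.8351 ≤ (0.8803:ℝ)^2 := by norm_num
      linarith
    calc Real.sqrt (∑' k : ℤ × ℤ,
          if k ≠ 0 then
            ((1 + τ * (2 * π * kn2 k) ^ 4)⁻¹) ^ 2 * ((2 * π * kn2 k) ^ 2)⁻¹
          else 0)
        ≤ Real.sqrt ((0.8803:ℝ)^2) := Real.sqrt_le_sqrt hfinal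
    _ = 0.8803 := Real.sqrt_sq (by norm_num)
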